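/- arXiv:2601.01808 — 3 statements merged into one kernel-verified Lean document; each statement's English description precedes it below -/
import Mathlib

section
/- Let Ω ⊂ ℝ^d satisfy an interior cone condition with angle α ∈ (0, π/2) and radius r > 0, i.e., for every x ∈ Ω there is a unit vector ξ(x) with the cone C(x, ξ(x), α, r) = { x + λ y : ‖y‖₂ = 1, y·ξ(x) ≥ cos α, λ ∈ [0, r] } ⊂ Ω. Define Z_n := { z ∈ 2^{-n} ℤ^d : z + [0, 2^{-n}]^d ⊂ Ω }. Then there exist n₀ ∈ ℕ and a constant C_Ω = 2√d (1+sin α)/sin α such that for all n ≥ n₀ and all shift vectors b ∈ [0, 2^{-n}]^d, the fill distance satisfies h_{Z_n + b, Ω} := sup_{x∈Ω} min_{z∈Z_n} ‖x − (z+b)‖₂ ≤ C_Ω 2^{-n}. -/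
open scoped RealInnerProductSpace

private lemma norm_le_sqrt_mul {d : ℕ} (v : EuclideanSpace ℝ (Fin d)) {a : ℝ} (ha : 0 ≤ a)
    (h : ∀ i, |v i| ≤ a) : ‖v‖ ≤ Real.sqrt d * a := by
  rw [EuclideanSpace.norm_eq]
  have h1 : ∑ i, ‖v i‖ ^ 2 ≤ ∑ _i : Fin d, a ^ 2 := by
    refine Finset.sum_le_sum fun i _ => ?_
    have := abs_le.mp (h i)
    rw [Real.norm_eq_abs, sq_abs]
    exact sq_le_sq' this.1 this.2
  have h2 : ∑ _i : Fin d, a ^ 2 = (d : ℝ) * a ^ 2 := by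
    simp [Finset.sum_const, Finset.card_fin]
  calc Real.sqrt (∑ i, ‖v i‖ ^ 2) ≤ Real.sqrt ((d : ℝ) * a ^ 2) :=
        Real.sqrt_le_sqrt (h2 ▸ h1)
    _ = Real.sqrt d * a := by
        rw [Real.sqrt_mul (Nat.cast_nonneg d), Real.sqrt_sq ha]

private lemma cone_inner_aux {L t s cα A : ℝ} (ht : 0 < t) (hL : 0 ≤ L)
    (hsq : L ^ 2 - 2 * (t * A) + t ^ 2 ≤ (t * s) ^ 2)
    (hssq : s ^ 2 = 1 - cα ^ 2) : A ≥ L * cα := by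
  have h5 : L ^ 2 + t ^ 2 * cα ^ 2 ≤ 2 * (t * A) := by nlinarith
  have h6 : 2 * L * (t * cα) ≤ L ^ 2 + t ^ 2 * cα ^ 2 := by nlinarith [sq_nonneg (L - t * cα)]
  have h7 : t * (L * cα) ≤ t * A := by nlinarith
  exact le_of_mul_le_mul_left h7 ht

/-- Fill distance of shifted grids in a domain with interior cone condition: there are
`n₀` and `C_Ω = 2√d (1+sin α)/sin α` such that for all `n ≥ n₀` and shifts
`b ∈ [0,2^{-n}]^d`, every `x ∈ Ω` is within distance `C_Ω 2^{-n}` of some point of `Z_n + b`,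
where `Z_n = { z ∈ 2^{-n}ℤ^d : z + [0,2^{-n}]^d ⊆ Ω }`. -/
theorem fill_distance_of_grid
    {d : ℕ} (hd : 0 < d)
    (Ω : Set (EuclideanSpace ℝ (Fin d)))
    (α : ℝ) (hα0 : 0 < α) (hα1 : α < Real.pi / 2) (r : ℝ) (hr : 0 < r)
    (hcone : ∀ x ∈ Ω, ∃ ξ : EuclideanSpace ℝ (Fin d), ‖ξ‖ = 1 ∧
      {p : EuclideanSpace ℝ (Fin d) |
        ∃ (y : EuclideanSpace ℝ (Fin d)) (l : ℝ), ‖y‖ = 1 ∧ ⟪y, ξ⟫ ≥ Real.cos α ∧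
          l ∈ Set.Icc (0 : ℝ) r ∧ p = x + l • y} ⊆ Ω) :
    ∃ n₀ : ℕ, ∀ n : ℕ, n₀ ≤ n →
      ∀ b : EuclideanSpace ℝ (Fin d), (∀ i, b i ∈ Set.Icc (0 : ℝ) ((2 : ℝ) ^ (-(n : ℝ)))) →
        ∀ x ∈ Ω, ∃ z : EuclideanSpace ℝ (Fin d),
          (∃ m : Fin d → ℤ, (∀ i, z i = (2 : ℝ) ^ (-(n : ℝ)) * m i) ∧
            {y : EuclideanSpace ℝ (Fin d) |
              ∀ i, y i ∈ Set.Icc (z i) (z i + (2 : ℝ) ^ (-(n : ℝ)))} ⊆ Ω) ∧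
          ‖x - (z + b)‖ ≤
            (2 * Real.sqrt d * (1 + Real.sin α) / Real.sin α) * (2 : ℝ) ^ (-(n : ℝ)) := by
  have hπ : Real.pi / 2 < Real.pi := by linarith [Real.pi_pos]
  set s := Real.sin α with hs_def
  have hs : 0 < s := Real.sin_pos_of_pos_of_lt_pi hα0 (lt_trans hα1 hπ)
  have hs1 : s ≤ 1 := Real.sin_le_one α
  have hcos : 0 < Real.cos α := Real.cos_pos_of_mem_Ioo ⟨by linarith, hα1⟩
  have hsd : 0 < Real.sqrt d := Real.sqrt_pos.mpr (by exact_mod_cast hd)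
  set C := 2 * Real.sqrt d * (1 + s) / s with hC_def
  have hC : 0 < C := by positivity
  obtain ⟨n₀, hn₀⟩ := exists_pow_lt_of_lt_one (div_pos hr hC) (by norm_num : (1:ℝ)/2 < 1)
  refine ⟨n₀, fun n hn b hb x hx => ?_⟩
  set δ := (2 : ℝ) ^ (-(n : ℝ)) with hδ_def
  have hδ : 0 < δ := Real.rpow_pos_of_pos (by norm_num) _
  -- δ is small enough: C * δ ≤ r
  have hδr : C * δ ≤ r := by
    have e1 : δ = (1/2 : ℝ) ^ n := by
      rw [hδ_def, Real.rpow_neg (by norm_num), Real.rpow_natCast, one_div, inv_pow]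
    have e2 : ((1:ℝ)/2) ^ n ≤ ((1:ℝ)/2) ^ n₀ :=
      pow_le_pow_of_le_one (by norm_num) (by norm_num) hn
    have : δ ≤ r / C := by rw [e1]; exact le_of_lt (lt_of_le_of_lt e2 hn₀)
    calc C * δ ≤ C * (r / C) := by nlinarith
      _ = r := by field_simp
  obtain ⟨ξ, hξ, hsub⟩ := hcone x hx
  set t := 2 * Real.sqrt d * δ / s with ht_def
  have ht : 0 < t := by positivity
  have hts : t * s = 2 * Real.sqrt d * δ := by
    rw [ht_def, div_mul_cancel₀ _ hs.ne']
  have htnorm : ‖t • ξ‖ = t := by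
    rw [norm_smul, hξ, Real.norm_eq_abs, abs_of_pos ht, mul_one]
  have hs1' : s < 1 := by nlinarith [Real.sin_sq α, hs, hcos]
  have hCδ : C * δ = t + 2 * Real.sqrt d * δ := by
    rw [hC_def, ht_def]; field_simp
  set c : EuclideanSpace ℝ (Fin d) := x + t • ξ with hc_def
  -- key: any point within 2√d δ of c is in the cone, hence in Ω
  have key : ∀ p : EuclideanSpace ℝ (Fin d), ‖p - c‖ ≤ 2 * Real.sqrt d * δ → p ∈ Ω := by
    intro p hp
    apply hsub
    set u := p - x with hu_def
    have hu_eq : u - t • ξ = p - c := by rw [hu_def, hc_def]; abel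
    have hut : ‖u - t • ξ‖ ≤ t * s := by rw [hu_eq, hts]; exact hp
    have hlow : t - t * s ≤ ‖u‖ := by
      have := norm_sub_norm_le (t • ξ) u
      rw [htnorm, ← norm_neg (t • ξ - u)] at this
      have h2 : -(t • ξ - u) = u - t • ξ := by abel
      rw [h2] at this
      linarith
    have hl : 0 < ‖u‖ := by nlinarith [mul_pos ht (sub_pos.mpr hs1')]
    have hupper : ‖u‖ ≤ t + t * s := by
      have := norm_le_norm_add_norm_sub' u (t • ξ)
      rw [htnorm] at this; linarith
    have hinner : ⟪u, ξ⟫ ≥ ‖u‖ * Real.cos α := by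
      have hexp : ‖u - t • ξ‖ ^ 2 = ‖u‖ ^ 2 - 2 * (t * ⟪u, ξ⟫) + t ^ 2 := by
        rw [norm_sub_sq_real, real_inner_smul_right, htnorm]
      have hsq : ‖u‖ ^ 2 - 2 * (t * ⟪u, ξ⟫) + t ^ 2 ≤ (t * s) ^ 2 := by
        rw [← hexp]; exact pow_le_pow_left₀ (norm_nonneg _) hut 2
      exact cone_inner_aux ht (norm_nonneg u) hsq (Real.sin_sq α)
    refine ⟨‖u‖⁻¹ • u, ‖u‖, ?_, ?_, ⟨norm_nonneg _, ?_⟩, ?_⟩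
    · rw [norm_smul, Real.norm_eq_abs, abs_of_pos (inv_pos.mpr hl), inv_mul_cancel₀ hl.ne']
    · rw [real_inner_smul_left]
      calc Real.cos α = ‖u‖⁻¹ * (‖u‖ * Real.cos α) := by field_simp
        _ ≤ ‖u‖⁻¹ * ⟪u, ξ⟫ :=
            mul_le_mul_of_nonneg_left hinner (inv_nonneg.mpr hl.le)
    · calc ‖u‖ ≤ t + t * s := hupper
        _ ≤ t + 2 * Real.sqrt d * δ := by rw [hts]
        _ = C * δ := hCδ.symm
        _ ≤ r := hδr
    · rw [smul_inv_smul₀ hl.ne', hu_def]; abel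
  -- the grid point
  set m : Fin d → ℤ := fun i => ⌊c i / δ⌋ with hm_def
  set z : EuclideanSpace ℝ (Fin d) := WithLp.toLp 2 (fun i => δ * m i) with hz_def
  have hzc : ∀ i, z i ≤ c i ∧ c i ≤ z i + δ := by
    intro i
    constructor
    · calc z i = δ * ⌊c i / δ⌋ := rfl
        _ ≤ δ * (c i / δ) := by
            exact mul_le_mul_of_nonneg_left (Int.floor_le _) hδ.le
        _ = c i := by field_simp
    · have h1 : c i / δ < ⌊c i / δ⌋ + 1 := Int.lt_floor_add_one _
      have h2 : c i < δ * (⌊c i / δ⌋ + 1) := by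
        rw [← div_lt_iff₀' hδ]; exact h1
      have : z i + δ = δ * (⌊c i / δ⌋ + 1) := by
        simp only [hz_def, hm_def, PiLp.toLp_apply]; ring
      rw [this]; exact h2.le
  refine ⟨z, ⟨m, fun i => rfl, ?_⟩, ?_⟩
  · -- cube ⊆ Ω
    intro y hy
    apply key
    have hyc : ∀ i, |(y - c) i| ≤ δ := by
      intro i
      have h1 := (hy i).1
      have h2 := (hy i).2
      have h3 := (hzc i).1
      have h4 := (hzc i).2
      have : (y - c) i = y i - c i := by simp
      rw [this, abs_le]; constructor <;> linarith
    calc ‖y - c‖ ≤ Real.sqrt d * δ := norm_le_sqrt_mul _ hδ.le hyc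
      _ ≤ 2 * Real.sqrt d * δ := by nlinarith
  · -- distance estimate
    have hxc : x - c = -(t • ξ) := by rw [hc_def]; abel
    have hsplit : x - (z + b) = -(t • ξ) + ((c - z) + (-b)) := by
      rw [← hxc]; abel
    have hcz : ‖c - z‖ ≤ Real.sqrt d * δ := by
      refine norm_le_sqrt_mul _ hδ.le fun i => ?_
      have h3 := (hzc i).1
      have h4 := (hzc i).2
      have : (c - z) i = c i - z i := by simp
      rw [this, abs_le]; constructor <;> linarith
    have hbn : ‖b‖ ≤ Real.sqrt d * δ := by
      refine norm_le_sqrt_mul _ hδ.le fun i => ?_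
      have h1 := (hb i).1
      have h2 := (hb i).2
      rw [abs_le]; constructor <;> linarith
    calc ‖x - (z + b)‖ = ‖-(t • ξ) + ((c - z) + (-b))‖ := by rw [hsplit]
      _ ≤ ‖-(t • ξ)‖ + (‖c - z‖ + ‖-b‖) :=
          (norm_add_le _ _).trans (by gcongr; exact norm_add_le _ _)
      _ = t + (‖c - z‖ + ‖b‖) := by rw [norm_neg, norm_neg, htnorm]
      _ ≤ t + (Real.sqrt d * δ + Real.sqrt d * δ) := by gcongr
      _ = t + 2 * Real.sqrt d * δ := by ring
      _ = C * δ := hCδ.symm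
end

section
/- Let V be a Hilbert space, W ⊂ V a closed subspace, f ∈ V, and s = Π_W f the orthogonal projection of f onto W. Suppose additionally V carries a second norm ‖·‖₀ and a third norm family such that the Hölder inequality |⟨f, g⟩_V| ≤ ‖f‖_θ ‖g‖_{2−θ} and the interpolation inequality ‖g‖_{2−θ} ≤ ‖g‖₀^{θ−1} ‖g‖_V^{2−θ} hold for all relevant g, where θ ∈ [1,2]. Then ‖f − s‖_V ≤ ‖f‖_θ^{1/θ} · ‖f − s‖₀^{(θ−1)/θ}. -/
open scoped RealInnerProductSpace

/-- Abstract direct superconvergence step: if `s ∈ W` with `f - s ⊥ W` (orthogonal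
projection), the Hölder inequality `|⟨f,g⟩| ≤ N_θ f · N_{2-θ} g` and the interpolation
inequality `N_{2-θ} g ≤ (N₀ g)^{θ-1} ‖g‖^{2-θ}` hold, then
`‖f - s‖ ≤ (N_θ f)^{1/θ} (N₀ (f-s))^{(θ-1)/θ}`. -/
theorem abstract_superconvergence_projection_bound
    {V : Type*} [NormedAddCommGroup V] [InnerProductSpace ℝ V]
    (W : Submodule ℝ V)
    (θ : ℝ) (hθ1 : 1 ≤ θ) (hθ2 : θ ≤ 2)
    (N0 : V → ℝ) (Nθ : ℝ → V → ℝ)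
    (hN0 : ∀ g, 0 ≤ N0 g) (hNθ : ∀ t g, 0 ≤ Nθ t g)
    (f s : V)
    (hHolder : ∀ g : V, |⟪f, g⟫| ≤ Nθ θ f * Nθ (2 - θ) g)
    (hInterp : ∀ g : V, Nθ (2 - θ) g ≤ N0 g ^ (θ - 1) * ‖g‖ ^ (2 - θ))
    (hsW : s ∈ W) (horth : ∀ w ∈ W, ⟪f - s, w⟫ = 0) :
    ‖f - s‖ ≤ Nθ θ f ^ (1 / θ) * N0 (f - s) ^ ((θ - 1) / θ) := by
  set e := f - s with he
  set n := ‖e‖ with hn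
  set A := Nθ θ f with hA
  set B := N0 e with hB
  have hA0 : 0 ≤ A := hNθ θ f
  have hB0 : 0 ≤ B := hN0 e
  have hθ0 : 0 < θ := lt_of_lt_of_le one_pos hθ1
  -- trivial case
  rcases eq_or_lt_of_le (norm_nonneg e) with hzero | hpos
  · rw [hn, ← hzero]
    positivity
  -- key identity: n^2 = ⟪f, e⟫
  have hse : ⟪s, e⟫ = 0 := by
    rw [real_inner_comm]
    exact horth s hsW
  have hkey : n ^ (2 : ℕ) = ⟪f, e⟫ := by
    have : ⟪e, e⟫ = ⟪f, e⟫ - ⟪s, e⟫ := by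
      rw [he, inner_sub_left]
    rw [hn, ← real_inner_self_eq_norm_sq, this, hse, sub_zero]
  have hchain : n ^ (2 : ℕ) ≤ A * (B ^ (θ - 1) * n ^ (2 - θ)) := by
    calc n ^ (2 : ℕ) = ⟪f, e⟫ := hkey
      _ ≤ |⟪f, e⟫| := le_abs_self _
      _ ≤ A * Nθ (2 - θ) e := hHolder e
      _ ≤ A * (B ^ (θ - 1) * n ^ (2 - θ)) :=
        mul_le_mul_of_nonneg_left (hInterp e) hA0
  have hsplit : n ^ (2 : ℕ) = n ^ θ * n ^ (2 - θ) := by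
    rw [← Real.rpow_natCast n 2, ← Real.rpow_add hpos]
    norm_num
    rfl
  have hstep : n ^ θ ≤ A * B ^ (θ - 1) := by
    have hpow : (0 : ℝ) < n ^ (2 - θ) := Real.rpow_pos_of_pos hpos _
    have := hchain
    rw [hsplit, ← mul_assoc] at this
    exact le_of_mul_le_mul_right this hpow
  have hfinal := Real.rpow_le_rpow (Real.rpow_nonneg (le_of_lt hpos) θ) hstep
    (le_of_lt (one_div_pos.mpr hθ0))
  have hL : (n ^ θ) ^ (1 / θ) = n := by
    rw [← Real.rpow_mul (le_of_lt hpos), mul_one_div, div_self (ne_of_gt hθ0),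
      Real.rpow_one]
  have hR : (A * B ^ (θ - 1)) ^ (1 / θ) = A ^ (1 / θ) * B ^ ((θ - 1) / θ) := by
    rw [Real.mul_rpow hA0 (Real.rpow_nonneg hB0 _), ← Real.rpow_mul hB0,
      mul_one_div]
  rwa [hL, hR] at hfinal
end

section
/- Under the hypotheses of the previous abstraction, additionally assume the weak-norm bound ‖f − s‖₀ ≤ C h^τ ‖f − s‖_V for constants C, h, τ > 0. Then the combined estimate ‖f − s‖₀ ≤ C^θ h^{θτ} ‖f‖_θ holds (direct superconvergence estimate with rate θτ). -/
open scoped RealInnerProductSpace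

/-- Direct superconvergence estimate: under the abstract projection/Hölder/interpolation
hypotheses, combining with the weak-norm bound `N₀(f-s) ≤ C h^τ ‖f-s‖` yields
`N₀(f-s) ≤ C^θ h^{θτ} N_θ f`. -/
theorem abstract_direct_superconvergence
    {V : Type*} [NormedAddCommGroup V] [InnerProductSpace ℝ V]
    (W : Submodule ℝ V)
    (θ : ℝ) (hθ1 : 1 ≤ θ) (hθ2 : θ ≤ 2)
    (N0 : V → ℝ) (Nθ : ℝ → V → ℝ)
    (hN0 : ∀ g, 0 ≤ N0 g) (hNθ : ∀ t g, 0 ≤ Nθ t g)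
    (f s : V)
    (hHolder : ∀ g : V, |⟪f, g⟫| ≤ Nθ θ f * Nθ (2 - θ) g)
    (hInterp : ∀ g : V, Nθ (2 - θ) g ≤ N0 g ^ (θ - 1) * ‖g‖ ^ (2 - θ))
    (hsW : s ∈ W) (horth : ∀ w ∈ W, ⟪f - s, w⟫ = 0)
    (C h τ : ℝ) (hC : 0 < C) (hh : 0 < h) (hτ : 0 < τ)
    (hweak : N0 (f - s) ≤ C * h ^ τ * ‖f - s‖) :
    N0 (f - s) ≤ C ^ θ * h ^ (θ * τ) * Nθ θ f := by
  set x := N0 (f - s) with hxdef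
  set F := Nθ θ f with hFdef
  set a := ‖f - s‖ with hadef
  have hx0 : 0 ≤ x := hN0 _
  have hF0 : 0 ≤ F := hNθ _ _
  have hθ0 : 0 ≤ θ := by linarith
  have hRHS : 0 ≤ C ^ θ * h ^ (θ * τ) * F := by positivity
  rcases eq_or_lt_of_le (norm_nonneg (f - s)) with ha | ha
  · -- a = 0, so x ≤ 0 hence x = 0
    have hx : x ≤ 0 := by
      calc x ≤ C * h ^ τ * a := hweak
        _ = 0 := by rw [hadef, ← ha]; ring
    linarith
  -- Step 1 : a^2 ≤ F * (x^(θ-1) * a^(2-θ))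
  have hinner : ⟪f, f - s⟫ = a ^ (2:ℕ) := by
    have h0 : ⟪f - s, s⟫ = 0 := horth s hsW
    have h0' : ⟪s, f - s⟫ = 0 := by rw [real_inner_comm]; exact h0
    have hsplit : ⟪f, f - s⟫ = ⟪f - s, f - s⟫ + ⟪s, f - s⟫ := by
      rw [← inner_add_left, sub_add_cancel]
    rw [hsplit, h0', add_zero, real_inner_self_eq_norm_sq]
  have h1 : a ^ (2:ℝ) ≤ F * (x ^ (θ - 1) * a ^ (2 - θ)) :=
    calc a ^ (2:ℝ) = a ^ (2:ℕ) := by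
          rw [show ((2:ℝ)) = ((2:ℕ):ℝ) by norm_num, Real.rpow_natCast]
      _ = ⟪f, f - s⟫ := hinner.symm
      _ ≤ |⟪f, f - s⟫| := le_abs_self _
      _ ≤ F * Nθ (2 - θ) (f - s) := hHolder _
      _ ≤ F * (x ^ (θ - 1) * a ^ (2 - θ)) :=
          mul_le_mul_of_nonneg_left (hInterp _) hF0
  -- Step 2 : a^θ ≤ F * x^(θ-1)
  have h2 : a ^ θ ≤ F * x ^ (θ - 1) := by
    have hmul := mul_le_mul_of_nonneg_right h1
      (le_of_lt (Real.rpow_pos_of_pos ha (θ - 2)))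
    calc a ^ θ = a ^ (2:ℝ) * a ^ (θ - 2) := by
          rw [← Real.rpow_add ha]; ring_nf; rfl
      _ ≤ F * (x ^ (θ - 1) * a ^ (2 - θ)) * a ^ (θ - 2) := hmul
      _ = F * x ^ (θ - 1) * (a ^ (2 - θ) * a ^ (θ - 2)) := by ring
      _ = F * x ^ (θ - 1) := by
          rw [← Real.rpow_add ha]
          norm_num
  -- Step 3 : x^θ ≤ (C*h^τ)^θ * (F * x^(θ-1))
  have hK : (0:ℝ) < C * h ^ τ := by positivity
  have h3 : x ^ θ ≤ (C * h ^ τ) ^ θ * (F * x ^ (θ - 1)) := by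
    calc x ^ θ ≤ (C * h ^ τ * a) ^ θ := Real.rpow_le_rpow hx0 hweak hθ0
      _ = (C * h ^ τ) ^ θ * a ^ θ := Real.mul_rpow hK.le (le_of_lt ha)
      _ ≤ (C * h ^ τ) ^ θ * (F * x ^ (θ - 1)) :=
          mul_le_mul_of_nonneg_left h2 (Real.rpow_nonneg hK.le θ)
  have hKθ : (C * h ^ τ) ^ θ = C ^ θ * h ^ (θ * τ) := by
    rw [Real.mul_rpow hC.le (Real.rpow_nonneg hh.le τ), ← Real.rpow_mul hh.le,
      mul_comm τ θ]
  rcases eq_or_lt_of_le hx0 with hx | hx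
  · rw [← hx]; exact hRHS
  · -- x > 0 : divide by x^(θ-1)
    have hxp : (0:ℝ) < x ^ (θ - 1) := Real.rpow_pos_of_pos hx _
    have hxθ : x ^ θ = x ^ (θ - 1) * x := by
      calc x ^ θ = x ^ (θ - 1 + 1) := by norm_num
        _ = x ^ (θ - 1) * x ^ (1:ℝ) := Real.rpow_add hx _ _
        _ = x ^ (θ - 1) * x := by rw [Real.rpow_one]
    rw [hxθ, hKθ] at h3
    have : x ^ (θ - 1) * x ≤ x ^ (θ - 1) * (C ^ θ * h ^ (θ * τ) * F) := by
      calc x ^ (θ - 1) * x ≤ C ^ θ * h ^ (θ * τ) * (F * x ^ (θ - 1)) := h3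
        _ = x ^ (θ - 1) * (C ^ θ * h ^ (θ * τ) * F) := by ring
    exact le_of_mul_le_mul_left this hxp
end
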